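/- Fix s ∈ (0,1], n ∈ ℤ, η ∈ ℝ, and ε, ε₁ ∈ (0, 1/2). Then there exists a constant M > 0 such that for all (p, u) with ε ≤ u ≤ p ≤ 1 − ε₁: |K̃_n(η; p, u)| ≤ M; moreover, for each fixed u ∈ [ε, 1 − ε₁], the map p ↦ K̃_n(η; p, u) is differentiable at every p with u < p < 1 − ε₁ and its derivative satisfies |∂_p K̃_n(η; p, u)| ≤ M there. -/

import Mathlib

open Real MeasureTheory intervalIntegral

/-- The Volterra kernel `K_n(η; p, u)`. -/
noncomputable def Kkernel (s : ℝ) (n : ℤ) (η p u : ℝ) : ℝ :=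
  ∫ t in u..p,
    (t * Real.sqrt (t ^ 2 + s ^ 2 * (p ^ 2 - t ^ 2)) *
        Real.cos ((η / s) * Real.sqrt (p ^ 2 - t ^ 2)) *
        (Polynomial.Chebyshev.T ℝ |n|).eval
          (((1 - u) ^ 2 + 1 - t ^ 2) / (2 * (1 - u)))) /
      (Real.sqrt (p ^ 2 - t ^ 2) *
        Real.sqrt (1 - (((1 - u) ^ 2 + 1 - t ^ 2) / (2 * (1 - u))) ^ 2))

/-- The regularized Volterra kernel `K̃_n(η; p, u)`, obtained from `K_n` by the change of
variables `t = u + v (p - u)`. -/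
noncomputable def KkernelReg (s : ℝ) (n : ℤ) (η p u : ℝ) : ℝ :=
  Real.sqrt (1 - u) *
    ∫ v in (0 : ℝ)..1,
      (fun w =>
        (w * Real.sqrt (w ^ 2 + s ^ 2 * (p ^ 2 - w ^ 2)) *
            Real.cos ((η / s) * Real.sqrt (p ^ 2 - w ^ 2)) *
            (Polynomial.Chebyshev.T ℝ |n|).eval
              (((1 - u) ^ 2 + 1 - w ^ 2) / (2 * (1 - u)))) /
          (Real.sqrt v * Real.sqrt (1 - v) * Real.sqrt (p + w) * Real.sqrt (w + u) *
            Real.sqrt (1 + (u ^ 2 - w ^ 2) / (4 * (1 - u)))))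
        (u + v * (p - u))

namespace S15

/-- The singular weight `1/(√v √(1-v))`. -/
noncomputable def phi (v : ℝ) : ℝ := (Real.sqrt v * Real.sqrt (1 - v))⁻¹

/-- Numerator of the regular part of the integrand. -/
noncomputable def num (s : ℝ) (n : ℤ) (η u p w : ℝ) : ℝ :=
  w * Real.sqrt (w ^ 2 + s ^ 2 * (p ^ 2 - w ^ 2)) *
    Real.cos ((η / s) * Real.sqrt (p ^ 2 - w ^ 2)) *
    (Polynomial.Chebyshev.T ℝ |n|).eval (((1 - u) ^ 2 + 1 - w ^ 2) / (2 * (1 - u)))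

/-- Denominator of the regular part of the integrand. -/
noncomputable def den (u p w : ℝ) : ℝ :=
  Real.sqrt (p + w) * Real.sqrt (w + u) * Real.sqrt (1 + (u ^ 2 - w ^ 2) / (4 * (1 - u)))

/-- The regular part of the integrand. -/
noncomputable def G (s : ℝ) (n : ℤ) (η u v p : ℝ) : ℝ :=
  num s n η u p (u + v * (p - u)) / den u p (u + v * (p - u))

/-- The full integrand of the regularized kernel. -/
noncomputable def Fint (s : ℝ) (n : ℤ) (η u p v : ℝ) : ℝ :=
  ((u + v * (p - u)) *
      Real.sqrt ((u + v * (p - u)) ^ 2 + s ^ 2 * (p ^ 2 - (u + v * (p - u)) ^ 2)) *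
      Real.cos ((η / s) * Real.sqrt (p ^ 2 - (u + v * (p - u)) ^ 2)) *
      (Polynomial.Chebyshev.T ℝ |n|).eval
        (((1 - u) ^ 2 + 1 - (u + v * (p - u)) ^ 2) / (2 * (1 - u)))) /
    (Real.sqrt v * Real.sqrt (1 - v) * Real.sqrt (p + (u + v * (p - u))) *
      Real.sqrt ((u + v * (p - u)) + u) *
      Real.sqrt (1 + (u ^ 2 - (u + v * (p - u)) ^ 2) / (4 * (1 - u))))

lemma KkernelReg_eq (s : ℝ) (n : ℤ) (η p u : ℝ) :
    KkernelReg s n η p u = Real.sqrt (1 - u) * ∫ v in (0:ℝ)..1, Fint s n η u p v := rfl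

lemma Fint_eq (s : ℝ) (n : ℤ) (η u p v : ℝ) :
    Fint s n η u p v = phi v * G s n η u v p := by
  simp only [Fint, G, num, den, phi, div_eq_mul_inv, mul_inv]
  ring

lemma phi_nonneg (v : ℝ) : 0 ≤ phi v := by
  unfold phi; positivity

lemma measurable_Fint (s : ℝ) (n : ℤ) (η u p : ℝ) : Measurable (Fint s n η u p) := by
  unfold Fint; fun_prop

lemma Fint_one (s : ℝ) (n : ℤ) (η u p : ℝ) : Fint s n η u p 1 = 0 := by
  simp [Fint]

lemma phi_one : phi 1 = 0 := by simp [phi]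

lemma measurable_phi : Measurable phi := by unfold phi; fun_prop

lemma phi_integrable : IntervalIntegrable phi volume 0 1 := by
  have h1 : IntervalIntegrable phi volume 0 (1/2) := by
    apply IntervalIntegrable.mono_fun'
      (g := fun v => Real.sqrt 2 * v ^ (-(1:ℝ)/2))
    · exact (intervalIntegral.intervalIntegrable_rpow' (by norm_num)).const_mul _
    · exact measurable_phi.aestronglyMeasurable
    · rw [Filter.EventuallyLE, ae_restrict_iff' measurableSet_uIoc]
      refine Filter.Eventually.of_forall fun v hv => ?_
      rw [Set.uIoc_of_le (by norm_num : (0:ℝ) ≤ 1/2)] at hv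
      obtain ⟨hv0, hv1⟩ := hv
      have hphi : ‖phi v‖ = (Real.sqrt v)⁻¹ * (Real.sqrt (1-v))⁻¹ := by
        rw [Real.norm_eq_abs, abs_of_nonneg (phi_nonneg v), phi, mul_inv]
      rw [hphi]
      have hrw : v ^ (-(1:ℝ)/2) = (Real.sqrt v)⁻¹ := by
        rw [Real.sqrt_eq_rpow, ← Real.rpow_neg hv0.le]
        norm_num
      rw [hrw, mul_comm (Real.sqrt 2) (Real.sqrt v)⁻¹]
      apply mul_le_mul_of_nonneg_left _ (by positivity)
      have h2 : Real.sqrt (1/2) ≤ Real.sqrt (1-v) := Real.sqrt_le_sqrt (by linarith)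
      have h3 : (0:ℝ) < Real.sqrt (1/2) := Real.sqrt_pos.2 (by norm_num)
      calc (Real.sqrt (1-v))⁻¹ ≤ (Real.sqrt (1/2))⁻¹ := by
            exact inv_anti₀ h3 h2
        _ = Real.sqrt 2 := by
            rw [show (1:ℝ)/2 = 2⁻¹ by norm_num, Real.sqrt_inv]
            rw [inv_inv]
  have h2 : IntervalIntegrable phi volume (1/2) 1 := by
    apply IntervalIntegrable.mono_fun'
      (g := fun v => Real.sqrt 2 * (1-v) ^ (-(1:ℝ)/2))
    · have hbase : IntervalIntegrable (fun x : ℝ => x ^ (-(1:ℝ)/2)) volume 0 (1/2) :=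
        intervalIntegral.intervalIntegrable_rpow' (by norm_num)
      have := ((hbase.comp_sub_left 1).symm.const_mul (Real.sqrt 2))
      norm_num at this ⊢
      exact this
    · exact measurable_phi.aestronglyMeasurable
    · rw [Filter.EventuallyLE, ae_restrict_iff' measurableSet_uIoc]
      refine Filter.Eventually.of_forall fun v hv => ?_
      rw [Set.uIoc_of_le (by norm_num : (1:ℝ)/2 ≤ 1)] at hv
      obtain ⟨hv0, hv1⟩ := hv
      have hphi : ‖phi v‖ = (Real.sqrt (1-v))⁻¹ * (Real.sqrt v)⁻¹ := by
        rw [Real.norm_eq_abs, abs_of_nonneg (phi_nonneg v), phi, mul_inv, mul_comm]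
      rw [hphi]
      have hrw : (1-v) ^ (-(1:ℝ)/2) = (Real.sqrt (1-v))⁻¹ := by
        rw [Real.sqrt_eq_rpow, ← Real.rpow_neg (by linarith)]
        norm_num
      rw [hrw, mul_comm (Real.sqrt 2) (Real.sqrt (1-v))⁻¹]
      apply mul_le_mul_of_nonneg_left _ (by positivity)
      have h2 : Real.sqrt (1/2) ≤ Real.sqrt v := Real.sqrt_le_sqrt (by linarith)
      have h3 : (0:ℝ) < Real.sqrt (1/2) := Real.sqrt_pos.2 (by norm_num)
      calc (Real.sqrt v)⁻¹ ≤ (Real.sqrt (1/2))⁻¹ := inv_anti₀ h3 h2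
        _ = Real.sqrt 2 := by
            rw [show (1:ℝ)/2 = 2⁻¹ by norm_num, Real.sqrt_inv, inv_inv]
  exact h1.trans h2


lemma cheb_abs_le (n : ℤ) {x : ℝ} (h1 : -1 ≤ x) (h2 : x ≤ 1) :
    |(Polynomial.Chebyshev.T ℝ |n|).eval x| ≤ 1 := by
  rw [← Real.cos_arccos h1 h2, Polynomial.Chebyshev.T_real_cos]
  exact Real.abs_cos_le_one _

set_option maxHeartbeats 1000000 in
lemma abs_G_le (s : ℝ) (n : ℤ) (η : ℝ) {ε δ u v p : ℝ}
    (hs : 0 < s) (hs1 : s ≤ 1) (hε : 0 < ε) (hε1 : ε ≤ 1/2) (hδ : 0 < δ)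
    (hεu : ε ≤ u) (hup : u ≤ p) (hpδ : p ≤ 1 - δ)
    (hv0 : 0 ≤ v) (hv1 : v ≤ 1) :
    |G s n η u v p| ≤ 1 / (ε^2/2) := by
  have hw_lb : u ≤ u + v * (p - u) := by nlinarith [mul_nonneg hv0 (sub_nonneg.mpr hup)]
  have hw_ub : u + v * (p - u) ≤ p := by
    nlinarith [mul_nonneg (sub_nonneg.mpr hv1) (sub_nonneg.mpr hup)]
  set w := u + v * (p - u) with hw
  have hw0 : 0 < w := lt_of_lt_of_le hε (le_trans hεu hw_lb)
  have hp1 : p ≤ 1 := by linarith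
  have hw1 : w ≤ 1 := le_trans hw_ub hp1
  have h1u : δ ≤ 1 - u := by linarith
  have h1u0 : 0 < 1 - u := lt_of_lt_of_le hδ h1u
  have hq0 : (0:ℝ) ≤ p^2 - w^2 := by nlinarith
  have hn2arg_le : w^2 + s^2*(p^2 - w^2) ≤ 1 := by
    nlinarith [mul_nonneg (by nlinarith : (0:ℝ) ≤ 1 - s^2) hq0]
  have hn2_le : Real.sqrt (w^2 + s^2*(p^2 - w^2)) ≤ 1 := Real.sqrt_le_one.mpr hn2arg_le
  have hx_le : ((1-u)^2 + 1 - w^2) / (2*(1-u)) ≤ 1 := by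
    rw [div_le_one (by positivity)]; nlinarith
  have hx_ge : (-1:ℝ) ≤ ((1-u)^2 + 1 - w^2) / (2*(1-u)) := by
    rw [le_div_iff₀ (by positivity)]; nlinarith
  have hT := cheb_abs_le n hx_ge hx_le
  have habs_num : |num s n η u p w| ≤ 1 := by
    unfold num
    rw [abs_mul, abs_mul, abs_mul]
    have h1 : |w| ≤ 1 := abs_le.mpr ⟨by linarith, hw1⟩
    have h2 : |Real.sqrt (w^2 + s^2*(p^2 - w^2))| ≤ 1 := by
      rw [abs_of_nonneg (Real.sqrt_nonneg _)]; exact hn2_le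
    exact mul_le_one₀ (mul_le_one₀ (mul_le_one₀ h1 (abs_nonneg _) h2) (abs_nonneg _)
      (Real.abs_cos_le_one _)) (abs_nonneg _) hT
  have hd1 : ε ≤ Real.sqrt (p + w) := (Real.le_sqrt' hε).mpr (by nlinarith)
  have hd2 : ε ≤ Real.sqrt (w + u) := (Real.le_sqrt' hε).mpr (by nlinarith)
  have he_lb : (1:ℝ)/2 ≤ 1 + (u^2 - w^2)/(4*(1-u)) := by
    have h : -(1/2 : ℝ) ≤ (u^2 - w^2)/(4*(1-u)) := by
      rw [le_div_iff₀ (by positivity)]; nlinarith [sq_nonneg (1-u)]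
    linarith
  have hd3 : (1:ℝ)/2 ≤ Real.sqrt (1 + (u^2 - w^2)/(4*(1-u))) :=
    (Real.le_sqrt' (by norm_num)).mpr (by nlinarith)
  have hden_lb : ε^2/2 ≤ den u p w := by
    unfold den
    have h := mul_le_mul (mul_le_mul hd1 hd2 hε.le (Real.sqrt_nonneg _)) hd3
      (by norm_num) (by positivity)
    nlinarith [h]
  unfold G
  rw [← hw, abs_div, abs_of_nonneg (by unfold den; positivity : (0:ℝ) ≤ den u p w)]
  exact div_le_div₀ (by norm_num) habs_num (by positivity) hden_lb


/-- Explicit formula for the `p`-derivative of `G`. -/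
noncomputable def Gd (s : ℝ) (n : ℤ) (η u v p : ℝ) : ℝ :=
  let w := u + v * (p - u)
  let sq := Real.sqrt (p ^ 2 - w ^ 2)
  let n2 := Real.sqrt (w ^ 2 + s ^ 2 * (p ^ 2 - w ^ 2))
  let c3 := Real.cos (η / s * sq)
  let x := ((1 - u) ^ 2 + 1 - w ^ 2) / (2 * (1 - u))
  let n4 := (Polynomial.Chebyshev.T ℝ |n|).eval x
  let d1 := Real.sqrt (p + w)
  let d2 := Real.sqrt (w + u)
  let d3 := Real.sqrt (1 + (u ^ 2 - w ^ 2) / (4 * (1 - u)))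
  let dq := 2 * p - 2 * w * v
  let dnum := ((v * n2 + w * ((2 * w * v + s ^ 2 * dq) / (2 * n2))) * c3 +
      w * n2 * (-Real.sin (η / s * sq) * (η / s * (dq / (2 * sq))))) * n4 +
    w * n2 * c3 * ((Polynomial.derivative (Polynomial.Chebyshev.T ℝ |n|)).eval x *
      (-(2 * w * v) / (2 * (1 - u))))
  let dden := ((1 + v) / (2 * d1) * d2 + d1 * (v / (2 * d2))) * d3 +
    d1 * d2 * (-(2 * w * v) / (4 * (1 - u)) / (2 * d3))
  (dnum * (d1 * d2 * d3) - (w * n2 * c3 * n4) * dden) / (d1 * d2 * d3) ^ 2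


/-- The constant bounding `|Gd|` on the region. -/
noncomputable def C2 (s η ε δ CT' : ℝ) : ℝ :=
  (4 * (1 + 3/ε + 2*(η/s)^2 + CT'/δ) + (3/ε + 2/δ)) / (ε^2/2)^2

private lemma amul {a b c d : ℝ} (ha : |a| ≤ c) (hb : |b| ≤ d) : |a*b| ≤ c*d := by
  rw [abs_mul]
  exact mul_le_mul ha hb (abs_nonneg _) (le_trans (abs_nonneg _) ha)

private lemma aadd {a b c d : ℝ} (ha : |a| ≤ c) (hb : |b| ≤ d) : |a+b| ≤ c+d :=
  (abs_add_le _ _).trans (add_le_add ha hb)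

private lemma adiv {a b c d : ℝ} (ha : |a| ≤ c) (hd : 0 < d) (hdb : d ≤ b) : |a/b| ≤ c/d := by
  rw [abs_div, abs_of_pos (lt_of_lt_of_le hd hdb)]
  exact div_le_div₀ (le_trans (abs_nonneg _) ha) ha hd hdb

set_option maxHeartbeats 1000000 in
private lemma region {s ε δ u v p : ℝ}
    (hs : 0 < s) (hs1 : s ≤ 1) (hε : 0 < ε) (hε1 : ε ≤ 1/2) (hδ : 0 < δ)
    (hεu : ε ≤ u) (hup : u < p) (hpδ : p ≤ 1 - δ)
    (hv0 : 0 ≤ v) (hv1 : v < 1) :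
    u ≤ u + v * (p - u) ∧ u + v * (p - u) < p ∧ 0 < u + v * (p - u) ∧
    u + v * (p - u) ≤ 1 ∧ 0 < 1 - u ∧ δ ≤ 1 - u ∧
    0 < p^2 - (u + v * (p - u))^2 ∧
    ε^2 ≤ (u + v * (p - u))^2 + s^2*(p^2 - (u + v * (p - u))^2) ∧
    (u + v * (p - u))^2 + s^2*(p^2 - (u + v * (p - u))^2) ≤ 1 ∧
    (0 ≤ (u + v * (p - u))*v ∧ (u + v * (p - u))*v ≤ 1) ∧
    (ε^2 ≤ p + (u + v * (p - u)) ∧ p + (u + v * (p - u)) ≤ 4) ∧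
    (ε^2 ≤ (u + v * (p - u)) + u ∧ (u + v * (p - u)) + u ≤ 4) ∧
    ((1/2:ℝ)^2 ≤ 1 + (u^2-(u + v * (p - u))^2)/(4*(1-u)) ∧
      1 + (u^2-(u + v * (p - u))^2)/(4*(1-u)) ≤ 1) ∧
    (-1 ≤ ((1-u)^2 + 1 - (u + v * (p - u))^2)/(2*(1-u)) ∧
      ((1-u)^2 + 1 - (u + v * (p - u))^2)/(2*(1-u)) ≤ 1) ∧
    (-4 ≤ 2*p - 2*(u + v * (p - u))*v ∧ 2*p - 2*(u + v * (p - u))*v ≤ 4) ∧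
    s^2 ≤ 1 ∧ p ≤ 1 := by
  have hpu : 0 < p - u := sub_pos.mpr hup
  have hR1 : u ≤ u + v * (p - u) := by nlinarith [mul_nonneg hv0 hpu.le]
  have hR2 : u + v * (p - u) < p := by nlinarith [mul_pos (sub_pos.mpr hv1) hpu]
  have hu0 : 0 < u := lt_of_lt_of_le hε hεu
  have hR3 : 0 < u + v * (p - u) := lt_of_lt_of_le hu0 hR1
  have hp1 : p ≤ 1 := by linarith
  have hp0 : 0 < p := lt_trans hu0 hup
  have hR4 : u + v * (p - u) ≤ 1 := by linarith
  have hR5 : 0 < 1 - u := by linarith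
  have hR6 : δ ≤ 1 - u := by linarith
  set w := u + v * (p - u) with hw
  have huu : u*u ≤ w*w := mul_self_le_mul_self hu0.le hR1
  have hww1 : w^2 ≤ 1 := pow_le_one₀ hR3.le hR4
  have hεε : ε^2 ≤ ε := by nlinarith [mul_nonneg hε.le (by linarith : (0:ℝ) ≤ 1 - ε)]
  have hR7 : 0 < p^2 - w^2 := by
    nlinarith [mul_pos (sub_pos.mpr hR2) (by linarith : (0:ℝ) < p + w)]
  have h1s2 : (0:ℝ) ≤ 1 - s^2 := by
    nlinarith [mul_nonneg (sub_nonneg.mpr hs1) (by linarith : (0:ℝ) ≤ 1 + s)]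
  have hR8 : ε^2 ≤ w^2 + s^2*(p^2 - w^2) := by
    nlinarith [mul_self_le_mul_self hε.le (by linarith : ε ≤ w),
      mul_nonneg (sq_nonneg s) hR7.le]
  have hR9 : w^2 + s^2*(p^2 - w^2) ≤ 1 := by
    nlinarith [mul_nonneg h1s2 hR7.le, (pow_le_one₀ hp0.le hp1 : p^2 ≤ 1)]
  have hwv0 : 0 ≤ w*v := mul_nonneg hR3.le hv0
  have hwv1 : w*v ≤ 1 := mul_le_one₀ hR4 hv0 hv1.le
  have he1 : (1/2:ℝ)^2 ≤ 1 + (u^2-w^2)/(4*(1-u)) := by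
    have h : -(3/4 : ℝ) ≤ (u^2 - w^2)/(4*(1-u)) := by
      rw [le_div_iff₀ (by positivity)]
      nlinarith [mul_nonneg (by linarith : (0:ℝ) ≤ 1-u) (by linarith : (0:ℝ) ≤ 2-u)]
    linarith [h]
  have he2 : 1 + (u^2-w^2)/(4*(1-u)) ≤ 1 := by
    have h : (u^2 - w^2)/(4*(1-u)) ≤ 0 :=
      div_nonpos_iff.mpr (Or.inr ⟨by nlinarith [huu], by positivity⟩)
    linarith
  have hx1 : -1 ≤ ((1-u)^2 + 1 - w^2)/(2*(1-u)) := by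
    rw [le_div_iff₀ (by positivity)]
    nlinarith [sq_nonneg (1-u)]
  have hx2 : ((1-u)^2 + 1 - w^2)/(2*(1-u)) ≤ 1 := by
    rw [div_le_one (by positivity)]
    nlinarith [huu]
  refine ⟨hR1, hR2, hR3, hR4, hR5, hR6, hR7, hR8, hR9, ⟨hwv0, hwv1⟩,
    ⟨by linarith, by linarith⟩, ⟨by linarith, by linarith⟩,
    ⟨he1, he2⟩, ⟨hx1, hx2⟩, ⟨by linarith, by linarith⟩, by nlinarith [h1s2], hp1⟩

set_option maxHeartbeats 1000000 in
lemma abs_Gd_le (s : ℝ) (n : ℤ) (η : ℝ) {ε δ u v p CT' : ℝ}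
    (hCT' : ∀ y ∈ Set.Icc (-1:ℝ) 1,
      |(Polynomial.derivative (Polynomial.Chebyshev.T ℝ |n|)).eval y| ≤ CT')
    (hs : 0 < s) (hs1 : s ≤ 1) (hε : 0 < ε) (hε1 : ε ≤ 1/2) (hδ : 0 < δ)
    (hεu : ε ≤ u) (hup : u < p) (hpδ : p ≤ 1 - δ)
    (hv0 : 0 ≤ v) (hv1 : v < 1) :
    |Gd s n η u v p| ≤ C2 s η ε δ CT' := by
  obtain ⟨hR1, hR2, hR3, hR4, hR5, hR6, hR7, hR8, hR9, ⟨hwv0, hwv1⟩,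
      ⟨hd1a, hd1b⟩, ⟨hd2a, hd2b⟩, ⟨he1, he2⟩, ⟨hx1, hx2⟩, ⟨hdq1, hdq2⟩, hs2, hp1⟩ :=
    region hs hs1 hε hε1 hδ hεu hup hpδ hv0 hv1
  simp only [Gd]
  set w := u + v * (p - u) with hwdef
  have hq_pos : (0:ℝ) < p^2 - w^2 := hR7
  set sq := Real.sqrt (p ^ 2 - w ^ 2) with hsqdef
  have hsq_pos : 0 < sq := Real.sqrt_pos.mpr hq_pos
  set n2 := Real.sqrt (w ^ 2 + s ^ 2 * (p ^ 2 - w ^ 2)) with hn2def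
  set c3 := Real.cos (η / s * sq) with hc3def
  set sn := Real.sin (η / s * sq) with hsndef
  set x := ((1 - u) ^ 2 + 1 - w ^ 2) / (2 * (1 - u)) with hxdef
  set n4 := (Polynomial.Chebyshev.T ℝ |n|).eval x with hn4def
  set n4' := (Polynomial.derivative (Polynomial.Chebyshev.T ℝ |n|)).eval x with hn4'def
  set d1 := Real.sqrt (p + w) with hd1def
  set d2 := Real.sqrt (w + u) with hd2def
  set d3 := Real.sqrt (1 + (u ^ 2 - w ^ 2) / (4 * (1 - u))) with hd3def
  -- basic component bounds
  have h_w_abs : |w| ≤ 1 := abs_le.mpr ⟨by linarith, hR4⟩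
  have h_v_abs : |v| ≤ 1 := abs_le.mpr ⟨by linarith, hv1.le⟩
  have h_n2_lb : ε ≤ n2 := (Real.le_sqrt' hε).mpr hR8
  have h_n2_ub : n2 ≤ 1 := Real.sqrt_le_one.mpr hR9
  have h_n2_abs : |n2| ≤ 1 := by
    rw [abs_of_nonneg (Real.sqrt_nonneg _)]; exact h_n2_ub
  have h_c3 : |c3| ≤ 1 := Real.abs_cos_le_one _
  have h_n4 : |n4| ≤ 1 := cheb_abs_le n hx1 hx2
  have h_n4' : |n4'| ≤ CT' := hCT' x ⟨hx1, hx2⟩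
  have h_dq : |2*p - 2*w*v| ≤ 4 := abs_le.mpr ⟨hdq1, hdq2⟩
  have h_2wv : |-(2*w*v)| ≤ 2 := by
    rw [abs_neg]; exact abs_le.mpr ⟨by linarith, by linarith⟩
  -- numerator of dn2
  have h_dn2num : |2*w*v + s^2*(2*p - 2*w*v)| ≤ 2 + 1*4 := by
    have hs2' : |s^2| ≤ 1 := by rw [abs_of_nonneg (sq_nonneg s)]; exact hs2
    have h3 : |2*w*v| ≤ 2 := abs_le.mpr ⟨by linarith, by linarith⟩
    exact aadd h3 (amul hs2' h_dq)
  have h_dn2 : |(2*w*v + s^2*(2*p - 2*w*v)) / (2*n2)| ≤ (2+1*4)/(2*ε) :=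
    adiv h_dn2num (by positivity) (by linarith)
  have h_P : |v * n2 + w * ((2*w*v + s^2*(2*p - 2*w*v)) / (2*n2))| ≤ 1*1 + 1*((2+1*4)/(2*ε)) :=
    aadd (amul h_v_abs h_n2_abs) (amul h_w_abs h_dn2)
  -- the sine term
  have h_sn : |sn| ≤ |η/s| * sq := by
    rw [hsndef]
    refine (Real.abs_sin_le_abs).trans ?_
    rw [abs_mul, abs_of_nonneg (Real.sqrt_nonneg _)]
  have h_inner : |η/s * ((2*p - 2*w*v)/(2*sq))| ≤ |η/s| * (4/(2*sq)) :=
    amul le_rfl (adiv h_dq (by positivity) le_rfl)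
  have h_dn3 : |(-sn * (η/s * ((2*p - 2*w*v)/(2*sq))))| ≤ 2*(η/s)^2 := by
    rw [abs_mul, abs_neg]
    calc |sn| * |η/s * ((2*p - 2*w*v)/(2*sq))|
        ≤ (|η/s| * sq) * (|η/s| * (4/(2*sq))) :=
          mul_le_mul h_sn h_inner (abs_nonneg _) (by positivity)
      _ = |η/s|^2 * (2 * (sq/sq)) := by ring
      _ = 2*(η/s)^2 := by rw [div_self (ne_of_gt hsq_pos), sq_abs]; ring
  have h_Y : |w * n2 * (-sn * (η/s * ((2*p - 2*w*v)/(2*sq))))| ≤ 1*1*(2*(η/s)^2) :=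
    amul (amul h_w_abs h_n2_abs) h_dn3
  have h_t4 : |n4' * (-(2*w*v)/(2*(1-u)))| ≤ CT' * (2/(2*δ)) :=
    amul h_n4' (adiv h_2wv (by positivity) (by linarith))
  have h_Z : |w * n2 * c3 * (n4' * (-(2*w*v)/(2*(1-u))))| ≤ 1*1*1*(CT' * (2/(2*δ))) :=
    amul (amul (amul h_w_abs h_n2_abs) h_c3) h_t4
  have h_dnum : |((v * n2 + w * ((2*w*v + s^2*(2*p - 2*w*v)) / (2*n2))) * c3 +
        w * n2 * (-sn * (η/s * ((2*p - 2*w*v)/(2*sq))))) * n4 +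
        w * n2 * c3 * (n4' * (-(2*w*v)/(2*(1-u))))| ≤
      ((1*1 + 1*((2+1*4)/(2*ε)))*1 + 1*1*(2*(η/s)^2))*1 + 1*1*1*(CT' * (2/(2*δ))) :=
    aadd (amul (aadd (amul h_P h_c3) h_Y) h_n4) h_Z
  have h_num : |w * n2 * c3 * n4| ≤ 1*1*1*1 := amul (amul (amul h_w_abs h_n2_abs) h_c3) h_n4
  -- denominator bounds
  have h_sqrt4 : Real.sqrt 4 = 2 := by
    rw [show (4:ℝ) = 2^2 by norm_num, Real.sqrt_sq (by norm_num : (0:ℝ) ≤ 2)]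
  have h_d1_lb : ε ≤ d1 := (Real.le_sqrt' hε).mpr hd1a
  have h_d2_lb : ε ≤ d2 := (Real.le_sqrt' hε).mpr hd2a
  have h_d3_lb : (1:ℝ)/2 ≤ d3 := (Real.le_sqrt' (by norm_num)).mpr he1
  have h_d1_ub : d1 ≤ 2 := by
    rw [hd1def, ← h_sqrt4]; exact Real.sqrt_le_sqrt hd1b
  have h_d2_ub : d2 ≤ 2 := by
    rw [hd2def, ← h_sqrt4]; exact Real.sqrt_le_sqrt hd2b
  have h_d3_ub : d3 ≤ 1 := Real.sqrt_le_one.mpr he2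
  have h_d1_abs : |d1| ≤ 2 := by rw [abs_of_nonneg (Real.sqrt_nonneg _)]; exact h_d1_ub
  have h_d2_abs : |d2| ≤ 2 := by rw [abs_of_nonneg (Real.sqrt_nonneg _)]; exact h_d2_ub
  have h_d3_abs : |d3| ≤ 1 := by rw [abs_of_nonneg (Real.sqrt_nonneg _)]; exact h_d3_ub
  have h_d1_pos : 0 < d1 := lt_of_lt_of_le hε h_d1_lb
  have h_d2_pos : 0 < d2 := lt_of_lt_of_le hε h_d2_lb
  have h_d3_pos : 0 < d3 := by linarith
  have hden_pos : 0 < d1 * d2 * d3 := by positivity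
  have hden_lb : ε^2/2 ≤ d1 * d2 * d3 := by
    have h := mul_le_mul (mul_le_mul h_d1_lb h_d2_lb hε.le (by positivity)) h_d3_lb
      (by norm_num) (by positivity)
    calc ε^2/2 = ε * ε * (1/2) := by ring
      _ ≤ d1 * d2 * d3 := h
  have hden_abs : |d1 * d2 * d3| ≤ 2*2*1 := amul (amul h_d1_abs h_d2_abs) h_d3_abs
  -- dden bound
  have h_T1 : |(1 + v) / (2*d1) * d2| ≤ 2/(2*ε)*2 :=
    amul (adiv (abs_le.mpr ⟨by linarith, by linarith⟩) (by positivity) (by linarith)) h_d2_abs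
  have h_T2 : |d1 * (v / (2*d2))| ≤ 2*(1/(2*ε)) :=
    amul h_d1_abs (adiv h_v_abs (by positivity) (by linarith))
  have h_T3 : |d1 * d2 * (-(2*w*v) / (4*(1-u)) / (2*d3))| ≤
      2*2*((2/(4*δ))/(2*(1/2))) :=
    amul (amul h_d1_abs h_d2_abs)
      (adiv (adiv h_2wv (by positivity) (by linarith)) (by norm_num) (by linarith))
  have h_dden : |((1 + v) / (2*d1) * d2 + d1 * (v / (2*d2))) * d3 +
      d1 * d2 * (-(2*w*v) / (4*(1-u)) / (2*d3))| ≤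
      (2/(2*ε)*2 + 2*(1/(2*ε)))*1 + 2*2*((2/(4*δ))/(2*(1/2))) :=
    aadd (amul (aadd h_T1 h_T2) h_d3_abs) h_T3
  -- assemble
  have h_top : |(((v * n2 + w * ((2*w*v + s^2*(2*p - 2*w*v)) / (2*n2))) * c3 +
        w * n2 * (-sn * (η/s * ((2*p - 2*w*v)/(2*sq))))) * n4 +
        w * n2 * c3 * (n4' * (-(2*w*v)/(2*(1-u))))) * (d1*d2*d3) -
        (w * n2 * c3 * n4) * (((1 + v) / (2*d1) * d2 + d1 * (v / (2*d2))) * d3 +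
        d1 * d2 * (-(2*w*v) / (4*(1-u)) / (2*d3)))| ≤
      (((1*1 + 1*((2+1*4)/(2*ε)))*1 + 1*1*(2*(η/s)^2))*1 + 1*1*1*(CT' * (2/(2*δ)))) * (2*2*1) +
        (1*1*1*1) * ((2/(2*ε)*2 + 2*(1/(2*ε)))*1 + 2*2*((2/(4*δ))/(2*(1/2)))) :=
    (abs_sub _ _).trans (add_le_add (amul h_dnum hden_abs) (amul h_num h_dden))
  rw [abs_div, abs_pow, abs_of_pos hden_pos]
  refine le_trans (div_le_div₀ (le_trans (abs_nonneg _) h_top) h_top (by positivity)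
    (pow_le_pow_left₀ (by positivity) hden_lb 2)) (le_of_eq ?_)
  rw [C2]
  ring


set_option maxHeartbeats 1000000 in
lemma hasDerivAt_G (s : ℝ) (n : ℤ) (η : ℝ) {ε δ u v p : ℝ}
    (hs : 0 < s) (hs1 : s ≤ 1) (hε : 0 < ε) (hε1 : ε ≤ 1/2) (hδ : 0 < δ)
    (hεu : ε ≤ u) (hup : u < p) (hpδ : p ≤ 1 - δ)
    (hv0 : 0 ≤ v) (hv1 : v < 1) :
    HasDerivAt (fun p' => G s n η u v p') (Gd s n η u v p) p := by
  obtain ⟨hR1, hR2, hR3, hR4, hR5, hR6, hR7, hR8, hR9, ⟨hwv0, hwv1⟩,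
      ⟨hd1a, hd1b⟩, ⟨hd2a, hd2b⟩, ⟨he1, he2⟩, ⟨hx1, hx2⟩, ⟨hdq1, hdq2⟩, hs2, hp1⟩ :=
    region hs hs1 hε hε1 hδ hεu hup hpδ hv0 hv1
  have hq : 0 < p ^ 2 - (u + v * (p - u)) ^ 2 := hR7
  have hn2 : 0 < (u + v * (p - u)) ^ 2 + s ^ 2 * (p ^ 2 - (u + v * (p - u)) ^ 2) := by
    nlinarith [hR8, sq_nonneg ε]
  have hd1 : 0 < p + (u + v * (p - u)) := by nlinarith [sq_nonneg ε]
  have hd2 : 0 < (u + v * (p - u)) + u := by nlinarith [sq_nonneg ε]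
  have hd3 : 0 < 1 + (u ^ 2 - (u + v * (p - u)) ^ 2) / (4 * (1 - u)) := by nlinarith [he1]
  simp only [G, num, den]
  have hW : HasDerivAt (fun p' : ℝ => u + v * (p' - u)) v p := by
    have := (((hasDerivAt_id' p).sub_const u).const_mul v).const_add (x := p) u
    simpa using this
  have hW2 : HasDerivAt (fun p' : ℝ => (u + v * (p' - u)) ^ 2) (2 * (u + v * (p - u)) * v) p := by
    have := hW.pow 2
    norm_num at this
    exact this
  have hQ : HasDerivAt (fun p' : ℝ => p' ^ 2 - (u + v * (p' - u)) ^ 2)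
      (2 * p - 2 * (u + v * (p - u)) * v) p := by
    have := (hasDerivAt_pow 2 p).sub hW2
    norm_num at this
    exact this
  have hSQ : HasDerivAt (fun p' : ℝ => Real.sqrt (p' ^ 2 - (u + v * (p' - u)) ^ 2))
      ((2 * p - 2 * (u + v * (p - u)) * v) / (2 * Real.sqrt (p ^ 2 - (u + v * (p - u)) ^ 2))) p :=
    hQ.sqrt (ne_of_gt hq)
  have hN3 : HasDerivAt
      (fun p' : ℝ => Real.cos ((η / s) * Real.sqrt (p' ^ 2 - (u + v * (p' - u)) ^ 2)))
      (-Real.sin (η / s * Real.sqrt (p ^ 2 - (u + v * (p - u)) ^ 2)) *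
        (η / s * ((2 * p - 2 * (u + v * (p - u)) * v) /
          (2 * Real.sqrt (p ^ 2 - (u + v * (p - u)) ^ 2))))) p :=
    (hSQ.const_mul (η / s)).cos
  have hN2 : HasDerivAt
      (fun p' : ℝ => Real.sqrt ((u + v * (p' - u)) ^ 2 + s ^ 2 * (p' ^ 2 - (u + v * (p' - u)) ^ 2)))
      ((2 * (u + v * (p - u)) * v + s ^ 2 * (2 * p - 2 * (u + v * (p - u)) * v)) /
        (2 * Real.sqrt ((u + v * (p - u)) ^ 2 + s ^ 2 * (p ^ 2 - (u + v * (p - u)) ^ 2)))) p :=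
    (hW2.add (hQ.const_mul (s ^ 2))).sqrt (ne_of_gt hn2)
  have hX : HasDerivAt (fun p' : ℝ => ((1 - u) ^ 2 + 1 - (u + v * (p' - u)) ^ 2) / (2 * (1 - u)))
      (-(2 * (u + v * (p - u)) * v) / (2 * (1 - u))) p := by
    have := (hW2.const_sub ((1 - u) ^ 2 + 1)).div_const (2 * (1 - u))
    simpa using this
  have hN4 : HasDerivAt
      (fun p' : ℝ => (Polynomial.Chebyshev.T ℝ |n|).eval
        (((1 - u) ^ 2 + 1 - (u + v * (p' - u)) ^ 2) / (2 * (1 - u))))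
      ((Polynomial.derivative (Polynomial.Chebyshev.T ℝ |n|)).eval
          (((1 - u) ^ 2 + 1 - (u + v * (p - u)) ^ 2) / (2 * (1 - u))) *
        (-(2 * (u + v * (p - u)) * v) / (2 * (1 - u)))) p := by
    have := (Polynomial.hasDerivAt (Polynomial.Chebyshev.T ℝ |n|)
      (((1 - u) ^ 2 + 1 - (u + v * (p - u)) ^ 2) / (2 * (1 - u)))).comp p hX
    simpa [Function.comp_def] using this
  have hNum := ((hW.mul hN2).mul hN3).mul hN4
  have hD1 : HasDerivAt (fun p' : ℝ => Real.sqrt (p' + (u + v * (p' - u))))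
      ((1 + v) / (2 * Real.sqrt (p + (u + v * (p - u))))) p :=
    ((hasDerivAt_id' p).add hW).sqrt (ne_of_gt hd1)
  have hD2 : HasDerivAt (fun p' : ℝ => Real.sqrt ((u + v * (p' - u)) + u))
      (v / (2 * Real.sqrt ((u + v * (p - u)) + u))) p :=
    (hW.add_const u).sqrt (ne_of_gt hd2)
  have hD3 : HasDerivAt
      (fun p' : ℝ => Real.sqrt (1 + (u ^ 2 - (u + v * (p' - u)) ^ 2) / (4 * (1 - u))))
      ((-(2 * (u + v * (p - u)) * v) / (4 * (1 - u))) /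
        (2 * Real.sqrt (1 + (u ^ 2 - (u + v * (p - u)) ^ 2) / (4 * (1 - u))))) p := by
    have h0 : HasDerivAt (fun p' : ℝ => 1 + (u ^ 2 - (u + v * (p' - u)) ^ 2) / (4 * (1 - u)))
        (-(2 * (u + v * (p - u)) * v) / (4 * (1 - u))) p := by
      have := ((hW2.const_sub (u ^ 2)).div_const (4 * (1 - u))).const_add 1
      simpa using this
    exact h0.sqrt (ne_of_gt hd3)
  have hDen := (hD1.mul hD2).mul hD3
  have hden_ne : Real.sqrt (p + (u + v * (p - u))) * Real.sqrt ((u + v * (p - u)) + u) *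
      Real.sqrt (1 + (u ^ 2 - (u + v * (p - u)) ^ 2) / (4 * (1 - u))) ≠ 0 := by
    have := Real.sqrt_pos.mpr hd1
    have := Real.sqrt_pos.mpr hd2
    have := Real.sqrt_pos.mpr hd3
    positivity
  have H := hNum.div hDen hden_ne
  convert H using 1
  all_goals rfl


lemma measurable_phiGd (s : ℝ) (n : ℤ) (η u p : ℝ) :
    Measurable (fun v => phi v * Gd s n η u v p) := by
  simp only [phi, Gd]
  fun_prop

lemma Fint_bound (s : ℝ) (n : ℤ) (η : ℝ) {ε ε₁ u p : ℝ}
    (hs0 : 0 < s) (hs1 : s ≤ 1) (hε0 : 0 < ε) (hε2 : ε ≤ 1/2) (hε10 : 0 < ε₁)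
    (hu : ε ≤ u) (hup : u ≤ p) (hp : p ≤ 1 - ε₁) :
    ∀ v ∈ Set.Ioc (0:ℝ) 1, ‖Fint s n η u p v‖ ≤ (1/(ε^2/2)) * phi v := by
  intro v hv
  rcases eq_or_lt_of_le hv.2 with h1 | h1
  · subst h1
    simp [Fint_one, phi_one]
  · rw [Fint_eq, Real.norm_eq_abs, abs_mul, abs_of_nonneg (phi_nonneg v), mul_comm]
    exact mul_le_mul_of_nonneg_right
      (abs_G_le s n η hs0 hs1 hε0 hε2 hε10 hu hup hp hv.1.le h1.le) (phi_nonneg v)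

end S15

open S15

set_option maxHeartbeats 1000000

theorem stmt15 (s : ℝ) (hs : s ∈ Set.Ioc (0 : ℝ) 1) (n : ℤ) (η : ℝ) (ε ε₁ : ℝ)
    (hε : ε ∈ Set.Ioo (0 : ℝ) (1 / 2)) (hε₁ : ε₁ ∈ Set.Ioo (0 : ℝ) (1 / 2)) :
    ∃ M : ℝ, 0 < M ∧
      (∀ p u : ℝ, ε ≤ u → u ≤ p → p ≤ 1 - ε₁ → |KkernelReg s n η p u| ≤ M) ∧
      (∀ u ∈ Set.Icc ε (1 - ε₁), ∀ p : ℝ, u < p → p < 1 - ε₁ →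
        DifferentiableAt ℝ (fun p' => KkernelReg s n η p' u) p ∧
          |deriv (fun p' => KkernelReg s n η p' u) p| ≤ M) := by
  obtain ⟨hs0, hs1⟩ := hs
  obtain ⟨hε0, hε2⟩ := hε
  obtain ⟨hε10, hε12⟩ := hε₁
  obtain ⟨CT', hCT'⟩ : ∃ C : ℝ, ∀ y ∈ Set.Icc (-1:ℝ) 1,
      |(Polynomial.derivative (Polynomial.Chebyshev.T ℝ |n|)).eval y| ≤ C := by
    simpa [Real.norm_eq_abs] using isCompact_Icc.exists_bound_of_continuousOn
      (Polynomial.continuous (Polynomial.derivative (Polynomial.Chebyshev.T ℝ |n|))).continuousOn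
  have hCT'0 : 0 ≤ CT' := le_trans (abs_nonneg _) (hCT' 0 (by norm_num))
  set C1 : ℝ := 1 / (ε^2/2) with hC1
  set Cd : ℝ := C2 s η ε ε₁ CT' with hCd
  have hC1pos : 0 < C1 := by rw [hC1]; positivity
  have hCdpos : 0 < Cd := by
    rw [hCd, C2]
    apply div_pos _ (by positivity)
    have h1 : 0 ≤ 3/ε := by positivity
    have h2 : 0 ≤ 2*(η/s)^2 := by positivity
    have h3 : 0 ≤ CT'/ε₁ := div_nonneg hCT'0 (by linarith)
    have h4 : 0 ≤ 3/ε + 2/ε₁ := by positivity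
    linarith
  set I0 : ℝ := ∫ v in (0:ℝ)..1, phi v with hI0
  refine ⟨(C1 + Cd) * |I0| + 1, ?_, ?_, ?_⟩
  · nlinarith [abs_nonneg I0, mul_nonneg (by linarith : (0:ℝ) ≤ C1 + Cd) (abs_nonneg I0)]
  · -- boundedness of the kernel itself
    intro p u hu hup hp
    have hb := intervalIntegral.norm_integral_le_abs_of_norm_le
      (μ := volume) (a := 0) (b := 1)
      (f := fun v => Fint s n η u p v) (g := fun v => C1 * phi v)
      ((ae_restrict_iff' measurableSet_uIoc).mpr (Filter.Eventually.of_forall fun v hv => by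
        rw [Set.uIoc_of_le zero_le_one] at hv
        simpa [hC1] using Fint_bound s n η hs0 hs1 hε0 hε2.le hε10 hu hup hp v hv))
      (phi_integrable.const_mul C1)
    rw [KkernelReg_eq, abs_mul, abs_of_nonneg (Real.sqrt_nonneg _)]
    have h1u : Real.sqrt (1-u) ≤ 1 := Real.sqrt_le_one.mpr (by linarith)
    rw [Real.norm_eq_abs, intervalIntegral.integral_const_mul] at hb
    have h2 : |∫ v in (0:ℝ)..1, Fint s n η u p v| ≤ C1 * |I0| := by
      refine hb.trans (le_of_eq ?_)
      rw [abs_mul, abs_of_pos hC1pos, hI0]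
    calc Real.sqrt (1-u) * |∫ v in (0:ℝ)..1, Fint s n η u p v|
        ≤ 1 * (C1 * |I0|) := mul_le_mul h1u h2 (abs_nonneg _) one_pos.le
      _ ≤ (C1 + Cd) * |I0| + 1 := by
          nlinarith [abs_nonneg I0, mul_nonneg hCdpos.le (abs_nonneg I0)]
  · -- differentiability and bound on the derivative
    rintro u ⟨huε, hu1⟩ p hup hp1
    set r : ℝ := min ((p - u)/2) ((1 - ε₁ - p)/2) with hr
    have hr0 : 0 < r := lt_min (by linarith) (by linarith)
    have hball : ∀ p' ∈ Metric.ball p r, u < p' ∧ p' ≤ 1 - ε₁ := by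
      intro p' hp'
      rw [Metric.mem_ball, Real.dist_eq] at hp'
      have h1 := abs_lt.mp hp'
      have h2 : r ≤ (p-u)/2 := min_le_left _ _
      have h3 : r ≤ (1-ε₁-p)/2 := min_le_right _ _
      exact ⟨by linarith [h1.1], by linarith [h1.2]⟩
    have hintF : IntervalIntegrable (fun v => Fint s n η u p v) volume 0 1 := by
      refine (phi_integrable.const_mul C1).mono_fun'
        (measurable_Fint s n η u p).aestronglyMeasurable
        ((ae_restrict_iff' measurableSet_uIoc).mpr (Filter.Eventually.of_forall fun v hv => ?_))
      rw [Set.uIoc_of_le zero_le_one] at hv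
      simpa [hC1] using Fint_bound s n η hs0 hs1 hε0 hε2.le hε10 huε hup.le hp1.le v hv
    have H := intervalIntegral.hasDerivAt_integral_of_dominated_loc_of_deriv_le
      (μ := volume) (a := 0) (b := 1) (x₀ := p)
      (F := fun p' v => Fint s n η u p' v)
      (F' := fun p' v => phi v * Gd s n η u v p')
      (bound := fun v => Cd * phi v) (Metric.ball_mem_nhds p hr0)
      (Filter.Eventually.of_forall fun p' => (measurable_Fint s n η u p').aestronglyMeasurable)
      hintF
      (measurable_phiGd s n η u p).aestronglyMeasurable
      (Filter.Eventually.of_forall fun v hv p' hp' => by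
        show ‖phi v * Gd s n η u v p'‖ ≤ Cd * phi v
        rw [Set.uIoc_of_le zero_le_one] at hv
        rcases eq_or_lt_of_le hv.2 with h1 | h1
        · subst h1
          simp [phi_one]
        · obtain ⟨hup', hp1'⟩ := hball p' hp'
          have hGdb : |Gd s n η u v p'| ≤ Cd := by
            rw [hCd]
            exact abs_Gd_le s n η hCT' hs0 hs1 hε0 hε2.le hε10 huε hup' hp1' hv.1.le h1
          rw [Real.norm_eq_abs, abs_mul, abs_of_nonneg (phi_nonneg v), mul_comm Cd (phi v)]
          exact mul_le_mul_of_nonneg_left hGdb (phi_nonneg v))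
      (phi_integrable.const_mul Cd)
      (Filter.Eventually.of_forall fun v hv p' hp' => by
        show HasDerivAt (fun p'' => Fint s n η u p'' v) (phi v * Gd s n η u v p') p'
        rw [Set.uIoc_of_le zero_le_one] at hv
        rcases eq_or_lt_of_le hv.2 with h1 | h1
        · subst h1
          have hfun : (fun p'' => Fint s n η u p'' 1) = fun _ => (0:ℝ) :=
            funext fun p'' => Fint_one s n η u p''
          rw [hfun, phi_one, zero_mul]
          exact hasDerivAt_const _ 0
        · obtain ⟨hup', hp1'⟩ := hball p' hp'
          have h := (hasDerivAt_G s n η hs0 hs1 hε0 hε2.le hε10 huε hup' hp1'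
            hv.1.le h1).const_mul (phi v)
          have hfe : (fun p'' => Fint s n η u p'' v) = (fun p'' => phi v * G s n η u v p'') :=
            funext fun p'' => Fint_eq s n η u p'' v
          rw [hfe]
          exact h)
    obtain ⟨-, H2⟩ := H
    have hKD : HasDerivAt (fun p' => KkernelReg s n η p' u)
        (Real.sqrt (1-u) * ∫ v in (0:ℝ)..1, phi v * Gd s n η u v p) p := by
      have h3 : (fun p' => KkernelReg s n η p' u) =
          fun p' => Real.sqrt (1-u) * ∫ v in (0:ℝ)..1, Fint s n η u p' v :=
        funext fun p' => KkernelReg_eq s n η p' u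
      rw [h3]
      exact H2.const_mul _
    refine ⟨hKD.differentiableAt, ?_⟩
    rw [hKD.deriv]
    have hb := intervalIntegral.norm_integral_le_abs_of_norm_le
      (μ := volume) (a := 0) (b := 1)
      (f := fun v => phi v * Gd s n η u v p) (g := fun v => Cd * phi v)
      ((ae_restrict_iff' measurableSet_uIoc).mpr (Filter.Eventually.of_forall fun v hv => by
        show ‖phi v * Gd s n η u v p‖ ≤ Cd * phi v
        rw [Set.uIoc_of_le zero_le_one] at hv
        rcases eq_or_lt_of_le hv.2 with h1 | h1
        · subst h1
          simp [phi_one]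
        · have hGdb : |Gd s n η u v p| ≤ Cd := by
            rw [hCd]
            exact abs_Gd_le s n η hCT' hs0 hs1 hε0 hε2.le hε10 huε hup hp1.le hv.1.le h1
          rw [Real.norm_eq_abs, abs_mul, abs_of_nonneg (phi_nonneg v), mul_comm Cd (phi v)]
          exact mul_le_mul_of_nonneg_left hGdb (phi_nonneg v)))
      (phi_integrable.const_mul Cd)
    rw [abs_mul, abs_of_nonneg (Real.sqrt_nonneg _)]
    have h1u : Real.sqrt (1-u) ≤ 1 := Real.sqrt_le_one.mpr (by linarith)
    rw [Real.norm_eq_abs, intervalIntegral.integral_const_mul] at hb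
    have h2 : |∫ v in (0:ℝ)..1, phi v * Gd s n η u v p| ≤ Cd * |I0| := by
      refine hb.trans (le_of_eq ?_)
      rw [abs_mul, abs_of_pos hCdpos, hI0]
    calc Real.sqrt (1-u) * |∫ v in (0:ℝ)..1, phi v * Gd s n η u v p|
        ≤ 1 * (Cd * |I0|) := mul_le_mul h1u h2 (abs_nonneg _) one_pos.le
      _ ≤ (C1 + Cd) * |I0| + 1 := by
          nlinarith [abs_nonneg I0, mul_nonneg hC1pos.le (abs_nonneg I0)]
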